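/- If μ > 0, σ > 0, d_min ≥ 1 is an integer, and |D| is a positive integer satisfying |D| ≤ (μ² √(d_min) / (μ² + σ²)) · exp((μ²/(2σ²))(d_min - 1)), then 1 - (|D| - 1) Φ(-(μ/σ)√(d_min)) ≥ Φ(μ/σ), where Φ is the standard normal CDF. (This is the sufficient condition under which dictionary decoding has higher expected bit accuracy than sign decoding.) -/

import Mathlib

open Real MeasureTheory Set Filter Topology

/-- The standard normal CDF. -/
noncomputable def Phi (x : ℝ) : ℝ :=
  ∫ t in Set.Iic x, (Real.sqrt (2 * Real.pi))⁻¹ * Real.exp (-(t ^ 2) / 2)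

noncomputable def gg (t : ℝ) : ℝ := Real.exp (-(t ^ 2) / 2)

lemma gg_eq : gg = fun x => Real.exp (-(1/2) * x ^ 2) := by
  funext x; simp only [gg]; ring_nf

lemma gg_int : Integrable gg := by
  rw [gg_eq]; exact integrable_exp_neg_mul_sq (by norm_num)

lemma gg_pos (t : ℝ) : 0 < gg t := Real.exp_pos _

lemma gg_cont : Continuous gg := by
  rw [gg_eq]; continuity

lemma gg_tendsto : Tendsto gg atTop (𝓝 0) := by
  rw [gg_eq]
  have h1 : Tendsto (fun x : ℝ => -(1/2) * x ^ 2) atTop atBot := by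
    apply Tendsto.neg_mul_atTop (by norm_num : (-(1/2) : ℝ) < 0) tendsto_const_nhds
    exact tendsto_pow_atTop (by norm_num)
  exact Real.tendsto_exp_atBot.comp h1

lemma gg_deriv (t : ℝ) : HasDerivAt gg (-t * gg t) t := by
  have h1 : HasDerivAt (fun x : ℝ => -(x ^ 2) / 2) (-t) t := by
    have := ((hasDerivAt_pow 2 t).neg).div_const 2
    refine this.congr_deriv ?_; push_cast; ring
  have := h1.exp
  refine this.congr_deriv ?_
  simp [gg]; ring

lemma gg_total : ∫ t, gg t = Real.sqrt (2 * π) := by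
  rw [gg_eq, integral_gaussian]
  rw [show π / (1/2) = 2 * π by ring]

/-- upper tail bound -/
lemma tail_le {a : ℝ} (ha : 0 < a) :
    ∫ t in Ioi a, gg t ≤ a⁻¹ * Real.exp (-(a ^ 2) / 2) := by
  have hint : IntegrableOn (fun t => a⁻¹ * (t * gg t)) (Ioi a) := by
    apply Integrable.integrableOn
    apply Integrable.const_mul
    have := integrable_mul_exp_neg_mul_sq (b := 1/2) (by norm_num)
    refine this.congr ?_
    filter_upwards with x
    rw [gg_eq]
  have key : ∫ t in Ioi a, a⁻¹ * (t * gg t) = a⁻¹ * Real.exp (-(a ^ 2) / 2) := by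
    have hder : ∀ x ∈ Ioi a, HasDerivAt (fun t => -(a⁻¹ * gg t)) (a⁻¹ * (x * gg x)) x := by
      intro x _
      have := ((gg_deriv x).const_mul a⁻¹).neg
      refine this.congr_deriv ?_; ring
    have htend : Tendsto (fun t => -(a⁻¹ * gg t)) atTop (𝓝 0) := by
      have := (gg_tendsto.const_mul a⁻¹).neg
      simpa using this
    rw [integral_Ioi_of_hasDerivAt_of_tendsto ((continuous_const.mul gg_cont).neg.continuousWithinAt) hder hint htend]
    simp [gg]
  calc ∫ t in Ioi a, gg t ≤ ∫ t in Ioi a, a⁻¹ * (t * gg t) := by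
        apply setIntegral_mono_on gg_int.integrableOn hint measurableSet_Ioi
        intro x hx
        have hx' : a < x := hx
        have : 1 ≤ a⁻¹ * x := by
          rw [← div_eq_inv_mul]; rw [le_div_iff₀ ha]; linarith
        nlinarith [gg_pos x, (gg_pos x).le]
    _ = a⁻¹ * Real.exp (-(a ^ 2) / 2) := key

/-- lower tail bound -/
lemma le_tail {a : ℝ} (ha : 0 < a) :
    a / (1 + a ^ 2) * Real.exp (-(a ^ 2) / 2) ≤ ∫ t in Ioi a, gg t := by
  set φ : ℝ → ℝ := fun t => gg t * (1 - 2 / (1 + t ^ 2) ^ 2) with hφ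
  have hpos : ∀ t : ℝ, (0:ℝ) < 1 + t ^ 2 := fun t => by positivity
  have hφint : IntegrableOn φ (Ioi a) := by
    apply Integrable.integrableOn
    apply gg_int.mono'
    · apply Continuous.aestronglyMeasurable
      apply gg_cont.mul
      apply Continuous.sub continuous_const
      apply Continuous.div continuous_const (by continuity)
      intro t; positivity
    · filter_upwards with t
      rw [hφ]
      simp only [Real.norm_eq_abs, abs_mul, abs_of_pos (gg_pos t)]
      have h1 : (0:ℝ) < (1 + t ^ 2) ^ 2 := by positivity
      have h2 : |1 - 2 / (1 + t ^ 2) ^ 2| ≤ 1 := by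
        rw [abs_le]
        constructor
        · have : 2 / (1 + t ^ 2) ^ 2 ≤ 2 := by
            rw [div_le_iff₀ h1]; nlinarith
          linarith
        · have : 0 < 2 / (1 + t ^ 2) ^ 2 := by positivity
          linarith
      calc gg t * |1 - 2 / (1 + t ^ 2) ^ 2| ≤ gg t * 1 :=
            mul_le_mul_of_nonneg_left h2 (gg_pos t).le
        _ = gg t := mul_one _
  have hder : ∀ x ∈ Ioi a, HasDerivAt (fun t => -(t / (1 + t ^ 2) * gg t)) (φ x) x := by
    intro x _
    have hd1 : HasDerivAt (fun t : ℝ => t / (1 + t ^ 2))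
        ((1 * (1 + x ^ 2) - x * (2 * x)) / (1 + x ^ 2) ^ 2) x := by
      exact (hasDerivAt_id x).div (((hasDerivAt_pow 2 x).const_add 1).congr_deriv (by push_cast; ring)) (hpos x).ne'
    have := (hd1.mul (gg_deriv x)).neg
    refine this.congr_deriv ?_
    rw [hφ]
    have h1 : (1 + x ^ 2) ≠ 0 := (hpos x).ne'
    field_simp
    ring
  have htend : Tendsto (fun t => -(t / (1 + t ^ 2) * gg t)) atTop (𝓝 0) := by
    rw [← neg_zero]
    apply Tendsto.neg
    rw [← zero_mul (0:ℝ)]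
    apply Tendsto.mul _ gg_tendsto
    apply squeeze_zero' (g := fun t : ℝ => t⁻¹)
    · filter_upwards [eventually_gt_atTop 0] with t ht
      positivity
    · filter_upwards [eventually_gt_atTop 0] with t ht
      rw [div_le_iff₀ (hpos t), show t⁻¹ * (1 + t ^ 2) = t⁻¹ + t⁻¹ * t ^ 2 by ring]
      have h2 : t⁻¹ * t ^ 2 = t := by field_simp
      rw [h2]
      linarith [inv_pos.mpr ht]
    · exact tendsto_inv_atTop_zero
  have key : ∫ t in Ioi a, φ t = a / (1 + a ^ 2) * gg a := by
    have hcont : Continuous fun t : ℝ => -(t / (1 + t ^ 2) * gg t) := by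
      apply Continuous.neg
      apply Continuous.mul _ gg_cont
      exact continuous_id.div (by continuity) fun t => (hpos t).ne'
    rw [integral_Ioi_of_hasDerivAt_of_tendsto hcont.continuousWithinAt hder hφint htend]
    simp
  calc a / (1 + a ^ 2) * Real.exp (-(a ^ 2) / 2) = ∫ t in Ioi a, φ t := by
        rw [key]; rfl
    _ ≤ ∫ t in Ioi a, gg t := by
        apply setIntegral_mono_on hφint gg_int.integrableOn measurableSet_Ioi
        intro x _
        rw [hφ]
        have : 0 < 2 / (1 + x ^ 2) ^ 2 := by positivity
        nlinarith [gg_pos x, (gg_pos x).le]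

lemma Phi_eq (x : ℝ) : Phi x = (Real.sqrt (2 * π))⁻¹ * ∫ t in Iic x, gg t := by
  rw [Phi, ← integral_const_mul]
  rfl

lemma Iic_neg_eq (a : ℝ) : ∫ t in Iic (-a), gg t = ∫ t in Ioi a, gg t := by
  have h := integral_comp_neg_Iic (-a) gg
  rw [neg_neg] at h
  rw [← h]
  apply setIntegral_congr_fun measurableSet_Iic
  intro x _
  simp [gg]

lemma one_sub_Phi (x : ℝ) : 1 - Phi x = (Real.sqrt (2 * π))⁻¹ * ∫ t in Ioi x, gg t := by
  have hs : (0:ℝ) < Real.sqrt (2 * π) := Real.sqrt_pos.mpr (by positivity)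
  have htot : (∫ t in Iic x, gg t) + ∫ t in Ioi x, gg t = Real.sqrt (2 * π) := by
    rw [intervalIntegral.integral_Iic_add_Ioi gg_int.integrableOn gg_int.integrableOn, gg_total]
  have h2 : (Real.sqrt (2 * π))⁻¹ * ((∫ t in Iic x, gg t) + ∫ t in Ioi x, gg t) = 1 := by
    rw [htot]; exact inv_mul_cancel₀ hs.ne'
  rw [mul_add] at h2
  rw [Phi_eq]
  linarith

/-- if `μ, σ > 0`, `d_min ≥ 1` and
`|D| ≤ (μ²√d_min/(μ²+σ²)) exp((μ²/(2σ²))(d_min-1))`, then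
`1 - (|D|-1) Φ(-(μ/σ)√d_min) ≥ Φ(μ/σ)`. -/
theorem stmt9 (μ σ : ℝ) (hμ : 0 < μ) (hσ : 0 < σ)
    (dmin Dsize : ℕ) (hd : 1 ≤ dmin) (hD : 1 ≤ Dsize)
    (hcond : (Dsize : ℝ) ≤
      μ ^ 2 * Real.sqrt dmin / (μ ^ 2 + σ ^ 2) *
        Real.exp (μ ^ 2 / (2 * σ ^ 2) * ((dmin : ℝ) - 1))) :
    Phi (μ / σ) ≤ 1 - ((Dsize : ℝ) - 1) * Phi (-(μ / σ) * Real.sqrt dmin) := by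
  set t := μ / σ with htdef
  have ht : 0 < t := div_pos hμ hσ
  set s := Real.sqrt dmin with hsdef
  have hd1 : (1:ℝ) ≤ (dmin:ℝ) := by exact_mod_cast hd
  have hs1 : 1 ≤ s := by
    rw [hsdef, show (1:ℝ) = Real.sqrt 1 by simp]
    exact Real.sqrt_le_sqrt hd1
  have hs0 : 0 < s := lt_of_lt_of_le one_pos hs1
  have hs2 : s ^ 2 = (dmin : ℝ) := Real.sq_sqrt (by positivity)
  have hts : 0 < t * s := mul_pos ht hs0
  have hc : (0:ℝ) < (Real.sqrt (2 * π))⁻¹ := by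
    rw [inv_pos]; exact Real.sqrt_pos.mpr (by positivity)
  -- rewrite Phi(-(t*s))
  have hPhineg : Phi (-t * s) = (Real.sqrt (2 * π))⁻¹ * ∫ u in Ioi (t * s), gg u := by
    rw [show -t * s = -(t * s) by ring, Phi_eq, Iic_neg_eq]
  rw [hPhineg]
  have hPhit : Phi t = 1 - (Real.sqrt (2 * π))⁻¹ * ∫ u in Ioi t, gg u := by
    have := one_sub_Phi t; linarith
  rw [hPhit]
  have hDm1 : (0:ℝ) ≤ (Dsize:ℝ) - 1 := by
    have : (1:ℝ) ≤ (Dsize:ℝ) := by exact_mod_cast hD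
    linarith
  have hUB : (0:ℝ) ≤ (t * s)⁻¹ * Real.exp (-((t * s) ^ 2) / 2) := by positivity
  have hexp : Real.exp (μ ^ 2 / (2 * σ ^ 2) * ((dmin : ℝ) - 1)) *
      Real.exp (-((t * s) ^ 2) / 2) = Real.exp (-(t ^ 2) / 2) := by
    rw [← Real.exp_add]
    congr 1
    have h2 : (t * s) ^ 2 = t ^ 2 * (dmin : ℝ) := by rw [mul_pow, hs2]
    rw [h2, htdef, div_pow]
    field_simp
    ring
  have hcoef : μ ^ 2 * s / (μ ^ 2 + σ ^ 2) * (t * s)⁻¹ = t / (1 + t ^ 2) := by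
    rw [htdef]
    have h1 : μ ^ 2 + σ ^ 2 ≠ 0 := by positivity
    field_simp
    ring
  have hmain : ((Dsize:ℝ) - 1) * ∫ u in Ioi (t * s), gg u ≤ ∫ u in Ioi t, gg u := by
    calc ((Dsize:ℝ) - 1) * ∫ u in Ioi (t * s), gg u
        ≤ ((Dsize:ℝ) - 1) * ((t * s)⁻¹ * Real.exp (-((t * s) ^ 2) / 2)) :=
          mul_le_mul_of_nonneg_left (tail_le hts) hDm1
      _ ≤ (Dsize:ℝ) * ((t * s)⁻¹ * Real.exp (-((t * s) ^ 2) / 2)) :=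
          mul_le_mul_of_nonneg_right (by linarith) hUB
      _ ≤ (μ ^ 2 * s / (μ ^ 2 + σ ^ 2) * Real.exp (μ ^ 2 / (2 * σ ^ 2) * ((dmin : ℝ) - 1))) *
            ((t * s)⁻¹ * Real.exp (-((t * s) ^ 2) / 2)) :=
          mul_le_mul_of_nonneg_right hcond hUB
      _ = (μ ^ 2 * s / (μ ^ 2 + σ ^ 2) * (t * s)⁻¹) *
            (Real.exp (μ ^ 2 / (2 * σ ^ 2) * ((dmin : ℝ) - 1)) *
              Real.exp (-((t * s) ^ 2) / 2)) := by ring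
      _ = t / (1 + t ^ 2) * Real.exp (-(t ^ 2) / 2) := by rw [hcoef, hexp]
      _ ≤ ∫ u in Ioi t, gg u := le_tail ht
  nlinarith [hmain, hc, mul_le_mul_of_nonneg_left hmain hc.le]
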